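/- Let X, Y, Z be random variables taking values in a finite set 𝒮 with |𝒮| = k, which are pairwise distinct almost surely (P(X=Y) = P(Y=Z) = P(X=Z) = 0) and conditionally independent given a finite random variable U. Then H(X,Y,Z|U) ≤ max{ log(k1·k2·k3) : k1, k2, k3 nonnegative integers with k1 + k2 + k3 = k }; consequently I(X,Y,Z;U) ≥ H(X,Y,Z) − max{ log(k1·k2·k3) : k1 + k2 + k3 = k }. -/

import Mathlib

open Filter

/-- A probability mass function on a finite alphabet. -/
def IsPMF {α : Type} [Fintype α] (p : α → ℝ) : Prop :=
  (∀ a, 0 ≤ p a) ∧ ∑ a, p a = 1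

/-- Total variation distance: half the `L¹` distance. -/
noncomputable def tv {α : Type} [Fintype α] (p q : α → ℝ) : ℝ :=
  (1 / 2) * ∑ a, |p a - q a|

open Classical in
/-- Joint type (empirical distribution) of a sequence. -/
noncomputable def jointType {α : Type} (n : ℕ) (s : Fin n → α) : α → ℝ :=
  fun a => ((Finset.univ.filter fun t => s t = a).card : ℝ) / n

open Classical in
/-- Pushforward of a mass function along a map. -/
noncomputable def pmfMap {S α : Type} [Fintype S] (p : S → ℝ) (f : S → α) : α → ℝ :=
  fun a => ∑ s, if f s = a then p s else 0

/-- Shannon entropy, base 2, with the convention `0 log 0 = 0`. -/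
noncomputable def H2 {α : Type} [Fintype α] (p : α → ℝ) : ℝ :=
  ∑ a, -(p a * Real.logb 2 (p a))

/-- Mutual information `I(f(S); g(S))` for `S ∼ p`. -/
noncomputable def MI {S α β : Type} [Fintype S] [Fintype α] [Fintype β]
    (p : S → ℝ) (f : S → α) (g : S → β) : ℝ :=
  H2 (pmfMap p f) + H2 (pmfMap p g) - H2 (pmfMap p fun s => (f s, g s))

/-- Conditional mutual information `I(f(S); g(S) | h(S))` for `S ∼ p`. -/
noncomputable def condMI {S α β γ : Type} [Fintype S] [Fintype α] [Fintype β] [Fintype γ]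
    (p : S → ℝ) (f : S → α) (g : S → β) (h : S → γ) : ℝ :=
  H2 (pmfMap p fun s => (f s, h s)) + H2 (pmfMap p fun s => (g s, h s))
    - H2 (pmfMap p fun s => (f s, g s, h s)) - H2 (pmfMap p h)

/-- The number of messages `⌈2^{nR}⌉` available at rate `R` and blocklength `n`. -/
noncomputable def msgCount (n : ℕ) (R : ℝ) : ℕ := ⌈(2 : ℝ) ^ ((n : ℝ) * R)⌉₊

open Classical in
/-- Probability of the event `E` under the (mass) distribution `μ`. -/
noncomputable def probOf {α : Type} [Fintype α] (μ : α → ℝ) (E : α → Prop) : ℝ :=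
  ∑ a, if E a then μ a else 0

lemma aux_pmfMap_nonneg {S α : Type} [Fintype S] (p : S → ℝ) (hp : ∀ s, 0 ≤ p s)
    (f : S → α) (a : α) : 0 ≤ pmfMap p f a := by
  classical
  unfold pmfMap
  exact Finset.sum_nonneg fun s _ => by split <;> simp [hp s]

lemma aux_pmfMap_sum {S α : Type} [Fintype S] [Fintype α] (p : S → ℝ) (f : S → α) :
    ∑ a, pmfMap p f a = ∑ s, p s := by
  classical
  unfold pmfMap
  rw [Finset.sum_comm]
  exact Finset.sum_congr rfl fun s _ => by simp

lemma aux_sum_pair {S α β : Type} [Fintype S] [Fintype α] [Fintype β]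
    (p : S → ℝ) (f : S → α) (g : S → β) (b : β) :
    ∑ a, pmfMap p (fun s => (f s, g s)) (a, b) = pmfMap p g b := by
  classical
  unfold pmfMap
  rw [Finset.sum_comm]
  refine Finset.sum_congr rfl fun s _ => ?_
  by_cases h : g s = b <;> simp [Prod.ext_iff, h]

lemma aux_single_le {S α : Type} [Fintype S] (p : S → ℝ) (hp : ∀ s, 0 ≤ p s) (f : S → α)
    (s : S) : p s ≤ pmfMap p f (f s) := by
  classical
  unfold pmfMap
  have h := Finset.single_le_sum (f := fun t => if f t = f s then p t else 0)
    (fun t _ => by split <;> simp [hp t]) (Finset.mem_univ s)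
  simpa using h

open Finset in
lemma aux_maxent {α : Type} [Fintype α] (p : α → ℝ) (h0 : ∀ a, 0 ≤ p a)
    (h1 : ∑ a, p a = 1) :
    H2 p ≤ Real.logb 2 (((Finset.univ.filter fun a => p a ≠ 0).card : ℕ) : ℝ) := by
  classical
  set t := Finset.univ.filter fun a => p a ≠ 0 with ht
  have hpos : ∀ a ∈ t, 0 < p a := fun a ha => by
    rw [ht, Finset.mem_filter] at ha
    exact (h0 a).lt_of_ne (Ne.symm ha.2)
  have hsum : ∑ a ∈ t, p a = 1 := by rw [ht, Finset.sum_filter_ne_zero]; exact h1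
  have hcard : ∑ a ∈ t, p a * (p a)⁻¹ = (t.card : ℝ) := by
    rw [Finset.sum_congr rfl fun a ha => mul_inv_cancel₀ (hpos a ha).ne']
    simp
  have jensen := strictConcaveOn_log_Ioi.concaveOn.le_map_sum
    (t := t) (w := p) (p := fun a => (p a)⁻¹)
    (fun a _ => h0 a) hsum
    (fun a ha => Set.mem_Ioi.mpr (inv_pos.mpr (hpos a ha)))
  simp only [smul_eq_mul] at jensen
  rw [hcard] at jensen
  have hH : H2 p = (∑ a ∈ t, p a * Real.log (p a)⁻¹) / Real.log 2 := by
    rw [H2, ← Finset.sum_subset (Finset.subset_univ t)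
      (fun a _ ha => by
        rw [ht, Finset.mem_filter] at ha
        push_neg at ha
        simp [ha (Finset.mem_univ a)])]
    rw [Finset.sum_div]
    refine Finset.sum_congr rfl fun a _ => ?_
    rw [Real.logb, Real.log_inv]
    ring
  rw [hH, Real.logb]
  exact div_le_div_of_nonneg_right jensen (Real.log_pos one_lt_two).le

lemma aux_H2_prod {α β : Type} [Fintype α] [Fintype β] (p : α → ℝ) (q : β → ℝ)
    (hp : ∑ a, p a = 1) (hq : ∑ b, q b = 1) :
    H2 (fun x : α × β => p x.1 * q x.2) = H2 p + H2 q := by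
  classical
  have key : ∀ (a : α) (b : β),
      -(p a * q b * Real.logb 2 (p a * q b)) =
        -(p a * Real.logb 2 (p a)) * q b + p a * -(q b * Real.logb 2 (q b)) := by
    intro a b
    by_cases hpa : p a = 0
    · simp [hpa]
    by_cases hqb : q b = 0
    · simp [hqb]
    rw [Real.logb_mul hpa hqb]; ring
  rw [H2, Fintype.sum_prod_type]
  simp only [key]
  have hrow : ∀ a : α,
      ∑ b, (-(p a * Real.logb 2 (p a)) * q b + p a * -(q b * Real.logb 2 (q b)))
        = -(p a * Real.logb 2 (p a)) + p a * H2 q := by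
    intro a
    rw [Finset.sum_add_distrib, ← Finset.mul_sum, ← Finset.mul_sum, hq, mul_one, H2]
  simp only [hrow]
  rw [Finset.sum_add_distrib, ← Finset.sum_mul, hp, one_mul]; rfl

def eQuad (α β γ δ : Type) : (α × β × γ × δ) ≃ ((α × β × γ) × δ) where
  toFun s := ((s.1, s.2.1, s.2.2.1), s.2.2.2)
  invFun t := (t.1.1, t.1.2.1, t.1.2.2, t.2)
  left_inv := fun _ => rfl
  right_inv := fun _ => rfl

lemma aux_pmfMap_equiv {S β : Type} [Fintype S] (p : S → ℝ) (e : S ≃ β) (b : β) :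
    pmfMap p e b = p (e.symm b) := by
  classical
  unfold pmfMap
  rw [Finset.sum_congr rfl fun s _ => by
    rw [show ((e s = b) = (s = e.symm b)) from by
      simp [Equiv.apply_eq_iff_eq_symm_apply]]]
  simp

lemma aux_H2_equiv {S β : Type} [Fintype S] [Fintype β] (p : S → ℝ) (e : S ≃ β) :
    H2 (pmfMap p e) = H2 p := by
  classical
  unfold H2
  rw [← Equiv.sum_comp e (fun b => -(pmfMap p (⇑e) b * Real.logb 2 (pmfMap p (⇑e) b)))]
  exact Finset.sum_congr rfl fun s _ => by rw [aux_pmfMap_equiv, Equiv.symm_apply_apply]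

/-- If `X, Y, Z` take values in a set of size `k`, are pairwise distinct a.s., and are
conditionally independent given a finite `U`, then
`H(X,Y,Z|U) ≤ max { log(k1·k2·k3) : k1 + k2 + k3 = k }` and consequently
`I(X,Y,Z;U) ≥ H(X,Y,Z) − max { log(k1·k2·k3) : k1 + k2 + k3 = k }`. -/
theorem task_assignment_entropy_bound {𝒮 𝒰 : Type} [Fintype 𝒮] [Fintype 𝒰]
    (k : ℕ) (hk : Fintype.card 𝒮 = k)
    (w : 𝒮 × 𝒮 × 𝒮 × 𝒰 → ℝ) (hw : IsPMF w)
    (hdistinct : ∀ x y z u, (x = y ∨ y = z ∨ x = z) → w (x, y, z, u) = 0)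
    (hcondind : ∀ x y z u,
      w (x, y, z, u) * (pmfMap w (fun s => s.2.2.2) u) ^ 2 =
        pmfMap w (fun s => (s.1, s.2.2.2)) (x, u) *
          pmfMap w (fun s => (s.2.1, s.2.2.2)) (y, u) *
          pmfMap w (fun s => (s.2.2.1, s.2.2.2)) (z, u)) :
    H2 w - H2 (pmfMap w fun s => s.2.2.2) ≤
      sSup {r : ℝ | ∃ k1 k2 k3 : ℕ, k1 + k2 + k3 = k ∧
        r = Real.logb 2 ((k1 * k2 * k3 : ℕ) : ℝ)} ∧
    H2 (pmfMap w fun s => (s.1, s.2.1, s.2.2.1)) -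
        sSup {r : ℝ | ∃ k1 k2 k3 : ℕ, k1 + k2 + k3 = k ∧
          r = Real.logb 2 ((k1 * k2 * k3 : ℕ) : ℝ)} ≤
      MI w (fun s => (s.1, s.2.1, s.2.2.1)) (fun s => s.2.2.2) := by
  classical
  obtain ⟨hw0, hw1⟩ := hw
  set Sset : Set ℝ := {r : ℝ | ∃ k1 k2 k3 : ℕ, k1 + k2 + k3 = k ∧
      r = Real.logb 2 ((k1 * k2 * k3 : ℕ) : ℝ)} with hSset
  set p : 𝒰 → ℝ := pmfMap w (fun s => s.2.2.2) with hp
  -- k ≥ 1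
  have hk1 : 1 ≤ k := by
    rcases Nat.eq_zero_or_pos k with h0 | h1
    · exfalso
      haveI : IsEmpty 𝒮 := Fintype.card_eq_zero_iff.mp (by rw [hk, h0])
      simp at hw1
    · exact h1
  -- boundedness of the sup set
  have hbdd : BddAbove Sset := by
    refine ⟨Real.logb 2 ((k : ℝ) ^ 3), ?_⟩
    rintro r ⟨k1, k2, k3, hsum, rfl⟩
    have hk3 : (1 : ℝ) ≤ (k : ℝ) ^ 3 :=
      one_le_pow₀ (by exact_mod_cast hk1)
    by_cases hz : (k1 * k2 * k3 : ℕ) = 0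
    · rw [hz]
      simpa using Real.logb_nonneg one_lt_two hk3
    · refine Real.logb_le_logb_of_le one_lt_two ?_ ?_
      · exact_mod_cast Nat.pos_of_ne_zero hz
      · have : k1 * k2 * k3 ≤ k * k * k := by
          have h1 : k1 ≤ k := by omega
          have h2 : k2 ≤ k := by omega
          have h3 : k3 ≤ k := by omega
          exact Nat.mul_le_mul (Nat.mul_le_mul h1 h2) h3
        have := (Nat.cast_le (α := ℝ)).mpr this
        push_cast at this ⊢
        nlinarith [this]
  -- p is nonnegative
  have hp0 : ∀ u, 0 ≤ p u := fun u => aux_pmfMap_nonneg w hw0 _ u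
  -- conditional distribution
  set q : 𝒰 → (𝒮 × 𝒮 × 𝒮) → ℝ :=
    fun u xyz => w (xyz.1, xyz.2.1, xyz.2.2, u) / p u with hqdef
  -- marginal over u
  have hmargU : ∀ u, ∑ xyz : 𝒮 × 𝒮 × 𝒮, w (xyz.1, xyz.2.1, xyz.2.2, u) = p u := by
    intro u
    calc ∑ xyz : 𝒮 × 𝒮 × 𝒮, w (xyz.1, xyz.2.1, xyz.2.2, u)
        = ∑ xyz : 𝒮 × 𝒮 × 𝒮, ∑ u' : 𝒰,
            if u' = u then w (xyz.1, xyz.2.1, xyz.2.2, u') else 0 := by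
          refine Finset.sum_congr rfl fun xyz _ => ?_
          simp
      _ = ∑ t : (𝒮 × 𝒮 × 𝒮) × 𝒰,
            if t.2 = u then w (t.1.1, t.1.2.1, t.1.2.2, t.2) else 0 :=
          (Fintype.sum_prod_type (f := fun t : (𝒮 × 𝒮 × 𝒮) × 𝒰 =>
            if t.2 = u then w (t.1.1, t.1.2.1, t.1.2.2, t.2) else 0)).symm
      _ = ∑ s : 𝒮 × 𝒮 × 𝒮 × 𝒰, if s.2.2.2 = u then w s else 0 :=
          (Fintype.sum_equiv (eQuad 𝒮 𝒮 𝒮 𝒰)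
            (fun s => if s.2.2.2 = u then w s else 0)
            (fun t => if t.2 = u then w (t.1.1, t.1.2.1, t.1.2.2, t.2) else 0)
            (fun s => rfl)).symm
      _ = p u := rfl
  have hqsum : ∀ u, p u ≠ 0 → ∑ xyz : 𝒮 × 𝒮 × 𝒮, q u xyz = 1 := by
    intro u hpu
    simp only [hqdef]
    rw [← Finset.sum_div, hmargU u, div_self hpu]
  -- reindexed entropy of w
  have hH2w : H2 w = ∑ u, ∑ xyz : 𝒮 × 𝒮 × 𝒮,
      -(w (xyz.1, xyz.2.1, xyz.2.2, u) *
        Real.logb 2 (w (xyz.1, xyz.2.1, xyz.2.2, u))) := by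
    calc H2 w = ∑ s : 𝒮 × 𝒮 × 𝒮 × 𝒰, -(w s * Real.logb 2 (w s)) := rfl
      _ = ∑ t : (𝒮 × 𝒮 × 𝒮) × 𝒰,
            -(w (t.1.1, t.1.2.1, t.1.2.2, t.2) *
              Real.logb 2 (w (t.1.1, t.1.2.1, t.1.2.2, t.2))) :=
          Fintype.sum_equiv (eQuad 𝒮 𝒮 𝒮 𝒰)
            (fun s => -(w s * Real.logb 2 (w s)))
            (fun t => -(w (t.1.1, t.1.2.1, t.1.2.2, t.2) *
              Real.logb 2 (w (t.1.1, t.1.2.1, t.1.2.2, t.2))))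
            (fun s => rfl)
      _ = ∑ xyz : 𝒮 × 𝒮 × 𝒮, ∑ u : 𝒰,
            -(w (xyz.1, xyz.2.1, xyz.2.2, u) *
              Real.logb 2 (w (xyz.1, xyz.2.1, xyz.2.2, u))) :=
          Fintype.sum_prod_type (f := fun t : (𝒮 × 𝒮 × 𝒮) × 𝒰 =>
            -(w (t.1.1, t.1.2.1, t.1.2.2, t.2) *
              Real.logb 2 (w (t.1.1, t.1.2.1, t.1.2.2, t.2))))
      _ = _ := Finset.sum_comm
  -- per-u entropy bound
  have hq_bound : ∀ u, p u ≠ 0 → H2 (q u) ≤ sSup Sset := by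
    intro u hpu
    have hpupos : 0 < p u := (hp0 u).lt_of_ne (Ne.symm hpu)
    set qx : 𝒮 → ℝ := fun x => pmfMap w (fun s => (s.1, s.2.2.2)) (x, u) / p u with hqx
    set qy : 𝒮 → ℝ := fun y => pmfMap w (fun s => (s.2.1, s.2.2.2)) (y, u) / p u with hqy
    set qz : 𝒮 → ℝ := fun z => pmfMap w (fun s => (s.2.2.1, s.2.2.2)) (z, u) / p u with hqz
    have hqx0 : ∀ x, 0 ≤ qx x := fun x =>
      div_nonneg (aux_pmfMap_nonneg w hw0 _ _) hpupos.le
    have hqy0 : ∀ y, 0 ≤ qy y := fun y =>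
      div_nonneg (aux_pmfMap_nonneg w hw0 _ _) hpupos.le
    have hqz0 : ∀ z, 0 ≤ qz z := fun z =>
      div_nonneg (aux_pmfMap_nonneg w hw0 _ _) hpupos.le
    have hqx1 : ∑ x, qx x = 1 := by
      simp only [hqx]
      rw [← Finset.sum_div,
        aux_sum_pair w (fun s => s.1) (fun s => s.2.2.2) u, ← hp, div_self hpu]
    have hqy1 : ∑ y, qy y = 1 := by
      simp only [hqy]
      rw [← Finset.sum_div,
        aux_sum_pair w (fun s => s.2.1) (fun s => s.2.2.2) u, ← hp, div_self hpu]
    have hqz1 : ∑ z, qz z = 1 := by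
      simp only [hqz]
      rw [← Finset.sum_div,
        aux_sum_pair w (fun s => s.2.2.1) (fun s => s.2.2.2) u, ← hp, div_self hpu]
    have hfact : ∀ xyz : 𝒮 × 𝒮 × 𝒮,
        q u xyz = qx xyz.1 * (qy xyz.2.1 * qz xyz.2.2) := by
      rintro ⟨x, y, z⟩
      have h := hcondind x y z u
      simp only [hqdef, hqx, hqy, hqz]
      field_simp
      linear_combination h
    -- product entropy
    have hq23 : ∑ yz : 𝒮 × 𝒮, qy yz.1 * qz yz.2 = 1 := by
      rw [Fintype.sum_prod_type, ← Finset.sum_mul_sum, hqy1, hqz1, one_mul]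
    have hH2q : H2 (q u) = H2 qx + (H2 qy + H2 qz) := by
      have hfun : q u = fun xyz : 𝒮 × 𝒮 × 𝒮 =>
          qx xyz.1 * ((fun yz : 𝒮 × 𝒮 => qy yz.1 * qz yz.2) xyz.2) := by
        funext xyz; exact hfact xyz
      rw [hfun, aux_H2_prod qx _ hqx1 hq23, aux_H2_prod qy qz hqy1 hqz1]
    -- supports
    set tx := Finset.univ.filter fun a => qx a ≠ 0 with htx
    set ty := Finset.univ.filter fun a => qy a ≠ 0 with hty
    set tz := Finset.univ.filter fun a => qz a ≠ 0 with htz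
    obtain ⟨x0, -, hx0⟩ := Finset.exists_ne_zero_of_sum_ne_zero
      (by rw [hqx1]; exact one_ne_zero)
    obtain ⟨y0, -, hy0⟩ := Finset.exists_ne_zero_of_sum_ne_zero
      (by rw [hqy1]; exact one_ne_zero)
    obtain ⟨z0, -, hz0⟩ := Finset.exists_ne_zero_of_sum_ne_zero
      (by rw [hqz1]; exact one_ne_zero)
    have hqzero : ∀ x y z, (x = y ∨ y = z ∨ x = z) → qx x * (qy y * qz z) = 0 := by
      intro x y z hxyz
      rw [← hfact ⟨x, y, z⟩]
      simp only [hqdef]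
      rw [hdistinct x y z u hxyz, zero_div]
    have hdisjxy : Disjoint tx ty := by
      rw [Finset.disjoint_left]
      intro a ha hb
      rw [htx, Finset.mem_filter] at ha
      rw [hty, Finset.mem_filter] at hb
      exact (mul_ne_zero ha.2 (mul_ne_zero hb.2 hz0))
        (hqzero a a z0 (Or.inl rfl))
    have hdisjyz : Disjoint ty tz := by
      rw [Finset.disjoint_left]
      intro a ha hb
      rw [hty, Finset.mem_filter] at ha
      rw [htz, Finset.mem_filter] at hb
      exact (mul_ne_zero hx0 (mul_ne_zero ha.2 hb.2))
        (hqzero x0 a a (Or.inr (Or.inl rfl)))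
    have hdisjxz : Disjoint tx tz := by
      rw [Finset.disjoint_left]
      intro a ha hb
      rw [htx, Finset.mem_filter] at ha
      rw [htz, Finset.mem_filter] at hb
      exact (mul_ne_zero ha.2 (mul_ne_zero hy0 hb.2))
        (hqzero a y0 a (Or.inr (Or.inr rfl)))
    have hcard : tx.card + ty.card + tz.card ≤ k := by
      have hdisj2 : Disjoint (tx ∪ ty) tz :=
        Finset.disjoint_union_left.mpr ⟨hdisjxz, hdisjyz⟩
      calc tx.card + ty.card + tz.card
          = (tx ∪ ty ∪ tz).card := by
            rw [Finset.card_union_of_disjoint hdisj2,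
              Finset.card_union_of_disjoint hdisjxy]
        _ ≤ Fintype.card 𝒮 := Finset.card_le_univ _
        _ = k := hk
    have hxpos : 1 ≤ tx.card := Finset.card_pos.mpr
      ⟨x0, by rw [htx, Finset.mem_filter]; exact ⟨Finset.mem_univ _, hx0⟩⟩
    have hypos : 1 ≤ ty.card := Finset.card_pos.mpr
      ⟨y0, by rw [hty, Finset.mem_filter]; exact ⟨Finset.mem_univ _, hy0⟩⟩
    have hzpos : 1 ≤ tz.card := Finset.card_pos.mpr
      ⟨z0, by rw [htz, Finset.mem_filter]; exact ⟨Finset.mem_univ _, hz0⟩⟩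
    -- entropy bound via support sizes
    have hmax : H2 (q u) ≤
        Real.logb 2 ((((k - ty.card - tz.card) * ty.card * tz.card : ℕ) : ℝ)) := by
      rw [hH2q]
      have bx := aux_maxent qx hqx0 hqx1
      have by' := aux_maxent qy hqy0 hqy1
      have bz := aux_maxent qz hqz0 hqz1
      rw [← htx] at bx
      rw [← hty] at by'
      rw [← htz] at bz
      calc H2 qx + (H2 qy + H2 qz)
          ≤ Real.logb 2 (tx.card : ℝ) +
            (Real.logb 2 (ty.card : ℝ) + Real.logb 2 (tz.card : ℝ)) :=
            add_le_add bx (add_le_add by' bz)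
        _ = Real.logb 2 (((tx.card * ty.card * tz.card : ℕ) : ℝ)) := by
            have hx' : (tx.card : ℝ) ≠ 0 := Nat.cast_ne_zero.mpr (by omega)
            have hy' : (ty.card : ℝ) ≠ 0 := Nat.cast_ne_zero.mpr (by omega)
            have hz' : (tz.card : ℝ) ≠ 0 := Nat.cast_ne_zero.mpr (by omega)
            push_cast
            rw [Real.logb_mul (mul_ne_zero hx' hy') hz', Real.logb_mul hx' hy']
            ring
        _ ≤ _ := by
            refine Real.logb_le_logb_of_le one_lt_two ?_ ?_
            · exact_mod_cast Nat.mul_pos (Nat.mul_pos hxpos hypos) hzpos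
            · have : tx.card * ty.card * tz.card ≤
                  (k - ty.card - tz.card) * ty.card * tz.card := by
                have : tx.card ≤ k - ty.card - tz.card := by omega
                exact Nat.mul_le_mul (Nat.mul_le_mul this le_rfl) le_rfl
              exact_mod_cast this
    refine le_trans hmax (le_csSup hbdd ?_)
    exact ⟨k - ty.card - tz.card, ty.card, tz.card, by omega, rfl⟩
  -- decomposition of conditional entropy
  have hrow : ∀ u, ∑ xyz : 𝒮 × 𝒮 × 𝒮,
      -(w (xyz.1, xyz.2.1, xyz.2.2, u) *
        Real.logb 2 (w (xyz.1, xyz.2.1, xyz.2.2, u)))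
        = -(p u * Real.logb 2 (p u)) + p u * H2 (q u) := by
    intro u
    by_cases hpu : p u = 0
    · have hw0' : ∀ xyz : 𝒮 × 𝒮 × 𝒮, w (xyz.1, xyz.2.1, xyz.2.2, u) = 0 := by
        intro xyz
        have h1 : w (xyz.1, xyz.2.1, xyz.2.2, u) ≤ p u :=
          aux_single_le w hw0 (fun s => s.2.2.2) (xyz.1, xyz.2.1, xyz.2.2, u)
        have h2 := hw0 (xyz.1, xyz.2.1, xyz.2.2, u)
        linarith [hpu ▸ h1]
      rw [Finset.sum_eq_zero (fun xyz _ => by rw [hw0' xyz]; simp), hpu]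
      simp
    · have hwq : ∀ xyz : 𝒮 × 𝒮 × 𝒮,
          w (xyz.1, xyz.2.1, xyz.2.2, u) = p u * q u xyz := by
        intro xyz
        simp only [hqdef]
        field_simp
      have key : ∀ xyz : 𝒮 × 𝒮 × 𝒮,
          -(w (xyz.1, xyz.2.1, xyz.2.2, u) *
            Real.logb 2 (w (xyz.1, xyz.2.1, xyz.2.2, u)))
            = -(p u * Real.logb 2 (p u)) * q u xyz +
              p u * -(q u xyz * Real.logb 2 (q u xyz)) := by
        intro xyz
        rw [hwq xyz]
        by_cases hq0 : q u xyz = 0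
        · simp [hq0]
        · rw [Real.logb_mul hpu hq0]; ring
      rw [Finset.sum_congr rfl fun xyz _ => key xyz, Finset.sum_add_distrib,
        ← Finset.mul_sum, ← Finset.mul_sum, hqsum u hpu, mul_one]
      rfl
  have hdecomp : H2 w - H2 p = ∑ u, p u * H2 (q u) := by
    rw [hH2w, Finset.sum_congr rfl fun u _ => hrow u, Finset.sum_add_distrib]
    have : H2 p = ∑ u, -(p u * Real.logb 2 (p u)) := rfl
    rw [this]
    ring
  have hpsum : ∑ u, p u = 1 := by rw [hp, aux_pmfMap_sum]; exact hw1
  have main1 : H2 w - H2 p ≤ sSup Sset := by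
    rw [hdecomp]
    calc ∑ u, p u * H2 (q u) ≤ ∑ u, p u * sSup Sset := by
          refine Finset.sum_le_sum fun u _ => ?_
          by_cases hpu : p u = 0
          · simp [hpu]
          · exact mul_le_mul_of_nonneg_left (hq_bound u hpu) (hp0 u)
      _ = sSup Sset := by rw [← Finset.sum_mul, hpsum, one_mul]
  refine ⟨main1, ?_⟩
  have hMI : MI w (fun s => (s.1, s.2.1, s.2.2.1)) (fun s => s.2.2.2)
      = H2 (pmfMap w fun s => (s.1, s.2.1, s.2.2.1)) + H2 p - H2 w := by
    simp only [MI]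
    rw [show (fun s : 𝒮 × 𝒮 × 𝒮 × 𝒰 => ((s.1, s.2.1, s.2.2.1), s.2.2.2))
        = ⇑(eQuad 𝒮 𝒮 𝒮 𝒰) from rfl, aux_H2_equiv, ← hp]
  rw [hMI]
  linarith [main1]
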